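/- Let Δ be a d-dimensional simplicial complex on n vertices over a field K, and t = C(d+2,2). Then dim_K of the degree-t part of the inverse system (I_Δ + (e_1,...,e_{d+1}))^{-1} is at least dim_K H̃_d(Δ; K). -/

import Mathlib

open MvPolynomial

/-- Division by a monomial, as a `K`-linear map. -/
noncomputable def divMonL (K : Type*) [Field K] (n : ℕ) (a : Fin n →₀ ℕ) :
    MvPolynomial (Fin n) K →ₗ[K] MvPolynomial (Fin n) K where
  toFun p := p.divMonomial a
  map_add' x y := MvPolynomial.add_divMonomial x y a
  map_smul' c x := by
    ext s
    simp [MvPolynomial.coeff_divMonomial, MvPolynomial.coeff_smul]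

/-- Contraction by `f`, as a `K`-linear map: on monomials, `x^a ∘ y^b = y^{b-a}` if
`a ≤ b` componentwise and `0` otherwise, extended bilinearly. -/
noncomputable def contractL {K : Type*} [Field K] {n : ℕ} (f : MvPolynomial (Fin n) K) :
    MvPolynomial (Fin n) K →ₗ[K] MvPolynomial (Fin n) K :=
  ∑ a ∈ f.support, f.coeff a • divMonL K n a

/-- The degree-`t` part of the inverse system `J⁻¹` of an ideal `J`, with respect to the
contraction action. -/
noncomputable def invSysPiece (K : Type*) [Field K] (n : ℕ)
    (J : Ideal (MvPolynomial (Fin n) K)) (t : ℕ) :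
    Submodule K (MvPolynomial (Fin n) K) :=
  homogeneousSubmodule (Fin n) K t ⊓ ⨅ g ∈ J, LinearMap.ker (contractL g)

/-- The coefficient of `τ` in the simplicial boundary of `F`. -/
def bdryCoeff {n : ℕ} (F τ : Finset (Fin n)) : ℤ :=
  if τ ⊆ F then ∑ v ∈ F \ τ, (-1) ^ ((F.filter fun w => w < v).card) else 0

/-- The top simplicial boundary map of a `d`-dimensional complex `Δ`, from `d`-chains to
`(d-1)`-chains (indexed by all `d`-element subsets). -/
noncomputable def bdryMap (K : Type*) [Field K] {n : ℕ} (Δ : Finset (Finset (Fin n)))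
    (d : ℕ) :
    (({σ // σ ∈ Δ.filter fun σ => σ.card = d + 1}) → K) →ₗ[K] (Finset (Fin n) → K) where
  toFun c := fun τ => if τ.card = d then
      ∑ σ : {σ // σ ∈ Δ.filter fun σ => σ.card = d + 1}, c σ * ((bdryCoeff σ.1 τ : ℤ) : K)
    else 0
  map_add' c c' := by
    funext τ
    by_cases h : τ.card = d <;> simp [h, add_mul, Finset.sum_add_distrib]
  map_smul' a c := by
    funext τ
    by_cases h : τ.card = d <;> simp [h, Finset.mul_sum, mul_assoc]

/-- The Stanley–Reisner ideal of a simplicial complex `Δ` on vertex set `Fin n`. -/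
noncomputable def SRIdeal (K : Type*) [Field K] (n : ℕ) (Δ : Finset (Finset (Fin n))) :
    Ideal (MvPolynomial (Fin n) K) :=
  Ideal.span {p | ∃ τ : Finset (Fin n), τ ∉ Δ ∧ p = ∏ j ∈ τ, X j}

namespace St13

variable {K : Type*} [Field K] {n : ℕ}

lemma coeff_contractL (g p : MvPolynomial (Fin n) K) (s : Fin n →₀ ℕ) :
    coeff s (contractL g p) = ∑ a ∈ g.support, coeff a g * coeff (a + s) p := by
  simp [contractL, divMonL, MvPolynomial.coeff_divMonomial, MvPolynomial.coeff_smul,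
    LinearMap.sum_apply, MvPolynomial.coeff_sum]

lemma coeff_contractL' (g p : MvPolynomial (Fin n) K) {T : Finset (Fin n →₀ ℕ)}
    (hT : g.support ⊆ T) (s : Fin n →₀ ℕ) :
    coeff s (contractL g p) = ∑ a ∈ T, coeff a g * coeff (a + s) p := by
  rw [coeff_contractL]
  exact Finset.sum_subset hT (fun a _ ha => by
    rw [MvPolynomial.notMem_support_iff.mp ha, zero_mul])

lemma contractL_add (g h : MvPolynomial (Fin n) K) :
    contractL (g + h) = contractL g + contractL h := by
  apply LinearMap.ext; intro p; apply MvPolynomial.ext; intro s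
  rw [LinearMap.add_apply, MvPolynomial.coeff_add,
    coeff_contractL' (g+h) p (T := g.support ∪ h.support)
      MvPolynomial.support_add,
    coeff_contractL' g p (T := g.support ∪ h.support) Finset.subset_union_left,
    coeff_contractL' h p (T := g.support ∪ h.support) Finset.subset_union_right,
    ← Finset.sum_add_distrib]
  exact Finset.sum_congr rfl (fun a _ => by rw [MvPolynomial.coeff_add, add_mul])

lemma contractL_zero : contractL (0 : MvPolynomial (Fin n) K) = 0 := by
  simp [contractL]

lemma contractL_sum {ι : Type*} (s : Finset ι) (f : ι → MvPolynomial (Fin n) K) :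
    contractL (∑ i ∈ s, f i) = ∑ i ∈ s, contractL (f i) := by
  induction s using Finset.cons_induction with
  | empty => simp [contractL_zero]
  | cons a s ha ih => rw [Finset.sum_cons, Finset.sum_cons, contractL_add, ih]

lemma contractL_monomial (a : Fin n →₀ ℕ) (c : K) :
    contractL (monomial a c) = c • divMonL K n a := by
  by_cases hc : c = 0
  · subst hc; rw [map_zero, contractL_zero, zero_smul]
  · simp [contractL, MvPolynomial.support_monomial, hc, MvPolynomial.coeff_monomial]

lemma divMonomial_comp (a b : Fin n →₀ ℕ) (p : MvPolynomial (Fin n) K) :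
    (p.divMonomial b).divMonomial a = p.divMonomial (a + b) := by
  ext s
  rw [MvPolynomial.coeff_divMonomial, MvPolynomial.coeff_divMonomial,
    MvPolynomial.coeff_divMonomial, add_right_comm, add_comm b]

lemma contractL_mul (p q : MvPolynomial (Fin n) K) :
    contractL (p * q) = (contractL p) ∘ₗ (contractL q) := by
  induction p using MvPolynomial.induction_on' with
  | monomial u a =>
    induction q using MvPolynomial.induction_on' with
    | monomial v b =>
      rw [MvPolynomial.monomial_mul, contractL_monomial, contractL_monomial,
        contractL_monomial]
      apply LinearMap.ext; intro x
      simp only [LinearMap.smul_apply, LinearMap.comp_apply, map_smul, divMonL,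
        LinearMap.coe_mk, AddHom.coe_mk, smul_smul, mul_comm a b]
      rw [divMonomial_comp]
    | add q1 q2 ih1 ih2 =>
      rw [mul_add, contractL_add, contractL_add, ih1, ih2, LinearMap.comp_add]
  | add p1 p2 ih1 ih2 =>
    rw [add_mul, contractL_add, contractL_add, ih1, ih2, LinearMap.add_comp]

lemma divMonomial_monomial (a b : Fin n →₀ ℕ) (r : K) :
    (monomial b r : MvPolynomial (Fin n) K).divMonomial a
      = if a ≤ b then monomial (b - a) r else 0 := by
  ext s
  rw [MvPolynomial.coeff_divMonomial]
  split_ifs with h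
  · rw [MvPolynomial.coeff_monomial, MvPolynomial.coeff_monomial]
    congr 1
    simp only [eq_iff_iff]
    constructor
    · rintro rfl; exact (add_tsub_cancel_left a s).symm ▸ rfl
    · rintro rfl; rw [add_tsub_cancel_of_le h]
  · rw [MvPolynomial.coeff_monomial, if_neg, MvPolynomial.coeff_zero]
    rintro rfl
    exact h le_self_add


variable {K : Type*} [Field K] {n : ℕ}

lemma prod_X_pow {ι : Type*} (s : Finset ι) (g : ι → Fin n) (e : ι → ℕ) :
    (∏ i ∈ s, (X (g i) : MvPolynomial (Fin n) K) ^ e i)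
      = monomial (∑ i ∈ s, Finsupp.single (g i) (e i)) 1 := by
  induction s using Finset.cons_induction with
  | empty => simp
  | cons a s ha ih =>
    rw [Finset.prod_cons, ih, X_pow_eq_monomial, monomial_mul, one_mul, Finset.sum_cons]

variable {d : ℕ}

/-- sum of singles along the enumeration of a (d+1)-set -/
noncomputable def sumSingle (σ : Finset (Fin n)) (h : σ.card = d + 1) (e : Fin (d + 1) → ℕ) : Fin n →₀ ℕ :=
  ∑ i : Fin (d + 1), Finsupp.single (σ.orderEmbOfFin h i) (e i)

lemma sumSingle_apply_emb (σ : Finset (Fin n)) (h : σ.card = d + 1) (e : Fin (d + 1) → ℕ)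
    (i : Fin (d + 1)) : sumSingle σ h e (σ.orderEmbOfFin h i) = e i := by
  rw [sumSingle, Finsupp.finset_sum_apply]
  rw [Finset.sum_eq_single i]
  · simp [Finsupp.single_apply]
  · intro j _ hj
    rw [Finsupp.single_apply, if_neg]
    exact fun hc => hj ((σ.orderEmbOfFin h).injective hc)
  · simp

lemma sumSingle_apply_not_mem (σ : Finset (Fin n)) (h : σ.card = d + 1) (e : Fin (d + 1) → ℕ)
    {v : Fin n} (hv : v ∉ σ) : sumSingle σ h e v = 0 := by
  rw [sumSingle, Finsupp.finset_sum_apply]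
  apply Finset.sum_eq_zero
  intro j _
  rw [Finsupp.single_apply, if_neg]
  intro hc; exact hv (hc ▸ σ.orderEmbOfFin_mem h j)

lemma mem_iff_emb (σ : Finset (Fin n)) (h : σ.card = d + 1) (v : Fin n) :
    v ∈ σ ↔ ∃ i, σ.orderEmbOfFin h i = v := by
  constructor
  · intro hv
    have := σ.range_orderEmbOfFin h
    have : v ∈ Set.range (σ.orderEmbOfFin h) := by rw [this]; exact hv
    exact this
  · rintro ⟨i, rfl⟩; exact σ.orderEmbOfFin_mem h i

/-- indicator finsupp of a finset -/
noncomputable def indF (S : Finset (Fin n)) : Fin n →₀ ℕ := ∑ v ∈ S, Finsupp.single v 1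

lemma indF_apply (S : Finset (Fin n)) (v : Fin n) :
    indF S v = if v ∈ S then 1 else 0 := by
  rw [indF, Finsupp.finset_sum_apply]
  simp only [Finsupp.single_apply]
  rw [Finset.sum_ite_eq' S v (fun _ => 1)]

lemma prod_X_eq_monomial_indF (S : Finset (Fin n)) :
    (∏ v ∈ S, (X v : MvPolynomial (Fin n) K)) = monomial (indF S) 1 := by
  have := prod_X_pow (K := K) S id (fun _ => 1)
  simpa [indF] using this

/-- the exponent of the π-term of `FF` -/
noncomputable def expo (σ : Finset (Fin n)) (h : σ.card = d + 1) (π : Equiv.Perm (Fin (d + 1))) :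
    Fin n →₀ ℕ := sumSingle σ h (fun i => (π i : ℕ) + 1)

/-- the basic alternating polynomial attached to a facet -/
noncomputable def FF (K : Type*) [Field K] (σ : Finset (Fin n)) (h : σ.card = d + 1) :
    MvPolynomial (Fin n) K :=
  Matrix.det (Matrix.of fun i j : Fin (d + 1) =>
    (X (σ.orderEmbOfFin h j) : MvPolynomial (Fin n) K) ^ ((i : ℕ) + 1))

lemma FF_eq (σ : Finset (Fin n)) (h : σ.card = d + 1) :
    FF K σ h = ∑ π : Equiv.Perm (Fin (d + 1)),
      monomial (expo σ h π) (((Equiv.Perm.sign π : ℤ) : K)) := by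
  rw [FF, Matrix.det_apply']
  apply Finset.sum_congr rfl
  intro π _
  rw [show (∏ i, Matrix.of (fun i j : Fin (d+1) =>
      (X (σ.orderEmbOfFin h j) : MvPolynomial (Fin n) K) ^ ((i : ℕ) + 1)) (π i) i)
    = monomial (expo σ h π) 1 from prod_X_pow Finset.univ _ _,
    ← map_intCast (C : K →+* MvPolynomial (Fin n) K), C_mul_monomial, mul_one]


variable {K : Type*} [Field K] {n : ℕ}

lemma card_filter_le (m a : ℕ) :
    ((Finset.univ : Finset (Fin m)).filter fun r : Fin m => a ≤ (r : ℕ)).card = m - a := by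
  classical
  set f : Fin (m - a) → Fin m := fun t => ⟨a + (t : ℕ), by have h := t.2; omega⟩ with hfdef
  have hinj : Function.Injective f := by
    intro t1 t2 h
    have := Fin.val_eq_of_eq h
    simp only [hfdef] at this
    exact Fin.ext (by omega)
  have himg : ((Finset.univ : Finset (Fin m)).filter fun r : Fin m => a ≤ (r : ℕ))
      = (Finset.univ : Finset (Fin (m - a))).image f := by
    ext r
    simp only [Finset.mem_filter, Finset.mem_univ, true_and, Finset.mem_image]
    constructor
    · intro hr
      refine ⟨⟨(r : ℕ) - a, by have h2 := r.2; omega⟩, Fin.ext ?_⟩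
      simp only [hfdef]
      omega
    · rintro ⟨t, ht⟩
      rw [← ht]
      simp only [hfdef]
      omega
  rw [himg, Finset.card_image_of_injective _ hinj, Finset.card_univ, Fintype.card_fin]

lemma card_filter_lt (m a : ℕ) (ha : a ≤ m) :
    ((Finset.univ : Finset (Fin m)).filter fun r : Fin m => (r : ℕ) < a).card = a := by
  classical
  have h1 := Finset.card_filter_add_card_filter_not
    (s := (Finset.univ : Finset (Fin m))) (p := fun r : Fin m => a ≤ (r : ℕ))
  have h2 : ((Finset.univ : Finset (Fin m)).filter fun r : Fin m => ¬ a ≤ (r : ℕ))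
      = ((Finset.univ : Finset (Fin m)).filter fun r : Fin m => (r : ℕ) < a) := by
    apply Finset.filter_congr; intro r _; simp
  rw [h2] at h1
  rw [card_filter_le] at h1
  simp only [Finset.card_univ, Fintype.card_fin] at h1
  omega

lemma image_filter_eq {α β : Type*} [Fintype α] [DecidableEq β] {f : α → β}
    (hf : Function.Injective f) {T : Finset β} (hT : ∀ v ∈ T, ∃ a, f a = v) :
    ((Finset.univ).filter fun a => f a ∈ T).image f = T := by
  ext v
  simp only [Finset.mem_image, Finset.mem_filter, Finset.mem_univ, true_and]
  constructor
  · rintro ⟨a, h1, rfl⟩; exact h1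
  · intro hv; obtain ⟨a, rfl⟩ := hT v hv; exact ⟨a, hv, rfl⟩

lemma card_filter_mem {α β : Type*} [Fintype α] [DecidableEq β] {f : α → β}
    (hf : Function.Injective f) {T : Finset β} (hT : ∀ v ∈ T, ∃ a, f a = v) :
    ((Finset.univ).filter fun a => f a ∈ T).card = T.card := by
  conv_rhs => rw [← image_filter_eq hf hT]
  rw [Finset.card_image_of_injective _ hf]

lemma degree_sumSingle {ι : Type*} [Fintype ι] (g : ι → Fin n) (e : ι → ℕ) :
    (∑ i : ι, Finsupp.single (g i) (e i)).degree = ∑ i : ι, e i := by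
  rw [Finsupp.degree_eq_weight_one, map_sum]
  apply Finset.sum_congr rfl
  intro i _
  rw [Finsupp.weight_apply, Finsupp.sum_single_index] <;> simp

lemma gauss (m : ℕ) : (∑ i : Fin m, ((i : ℕ) + 1)) = (m + 1).choose 2 := by
  induction m with
  | zero => simp
  | succ m ih =>
    rw [Fin.sum_univ_castSucc]
    simp only [Fin.coe_castSucc, Fin.val_last]
    rw [ih]
    have hps : (m + 1 + 1).choose 2 = (m + 1).choose 1 + (m + 1).choose 2 :=
      Nat.choose_succ_succ (m + 1) 1
    rw [hps, Nat.choose_one_right]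
    omega

variable {d : ℕ}

lemma expo_ne_zero_iff (σ : Finset (Fin n)) (h : σ.card = d + 1)
    (π : Equiv.Perm (Fin (d + 1))) (v : Fin n) : expo σ h π v ≠ 0 ↔ v ∈ σ := by
  constructor
  · intro hv
    by_contra hm
    exact hv (sumSingle_apply_not_mem σ h _ hm)
  · intro hv
    obtain ⟨i, rfl⟩ := (mem_iff_emb σ h v).mp hv
    rw [expo, sumSingle_apply_emb]
    omega

lemma expo_sets {σ σ' : Finset (Fin n)} {h : σ.card = d + 1} {h' : σ'.card = d + 1}
    {π π' : Equiv.Perm (Fin (d + 1))} (he : expo σ h π = expo σ' h' π') : σ = σ' := by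
  ext v
  rw [← expo_ne_zero_iff σ h π v, ← expo_ne_zero_iff σ' h' π' v, he]

lemma expo_perm_inj {σ : Finset (Fin n)} {h : σ.card = d + 1}
    {π π' : Equiv.Perm (Fin (d + 1))} (he : expo σ h π = expo σ h π') : π = π' := by
  apply Equiv.ext; intro i
  have h2 := congrArg (fun f : Fin n →₀ ℕ => f (σ.orderEmbOfFin h i)) he
  simp only [expo, sumSingle_apply_emb] at h2
  exact Fin.ext (by omega)

lemma coeff_FF (σ σ' : Finset (Fin n)) (h : σ.card = d + 1) (h' : σ'.card = d + 1)
    (π : Equiv.Perm (Fin (d + 1))) :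
    coeff (expo σ h π) (FF K σ' h')
      = if σ' = σ then ((Equiv.Perm.sign π : ℤ) : K) else 0 := by
  rw [FF_eq, MvPolynomial.coeff_sum]
  simp only [MvPolynomial.coeff_monomial]
  split_ifs with hs
  · subst hs
    rw [Finset.sum_eq_single π]
    · rw [if_pos rfl]
    · intro π' _ hπ
      rw [if_neg]
      intro hc
      exact hπ (expo_perm_inj hc)
    · simp
  · apply Finset.sum_eq_zero
    intro π' _
    rw [if_neg]
    intro hc
    exact hs (expo_sets hc)

lemma FF_homog (σ : Finset (Fin n)) (h : σ.card = d + 1) :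
    FF K σ h ∈ homogeneousSubmodule (Fin n) K ((d + 2).choose 2) := by
  rw [FF_eq]
  apply Submodule.sum_mem
  intro π _
  rw [mem_homogeneousSubmodule]
  apply isHomogeneous_monomial
  rw [expo, sumSingle, degree_sumSingle]
  rw [show (∑ i : Fin (d + 1), ((π i : ℕ) + 1)) = ∑ i : Fin (d + 1), ((i : ℕ) + 1) from
    Equiv.sum_comp π (fun j => (j : ℕ) + 1)]
  exact gauss (d + 1)

lemma not_indF_le {σ S : Finset (Fin n)} (hS : ¬ S ⊆ σ) (h : σ.card = d + 1)
    (π : Equiv.Perm (Fin (d + 1))) : ¬ indF S ≤ expo σ h π := by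
  intro hle
  obtain ⟨v, hvS, hvσ⟩ := Finset.not_subset.mp hS
  have h1 := (Finsupp.le_def.mp hle) v
  rw [indF_apply, if_pos hvS] at h1
  rw [expo] at h1
  rw [sumSingle_apply_not_mem σ h _ hvσ] at h1
  omega

lemma indF_le {σ S : Finset (Fin n)} (hS : S ⊆ σ) (h : σ.card = d + 1)
    (π : Equiv.Perm (Fin (d + 1))) : indF S ≤ expo σ h π := by
  rw [Finsupp.le_def]
  intro v
  rw [indF_apply]
  split_ifs with hv
  · obtain ⟨i, rfl⟩ := (mem_iff_emb σ h v).mp (hS hv)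
    rw [expo, sumSingle_apply_emb]
    omega
  · exact Nat.zero_le _

lemma divMon_FF_zero (σ : Finset (Fin n)) (h : σ.card = d + 1) {S : Finset (Fin n)}
    (hS : ¬ S ⊆ σ) : (FF K σ h).divMonomial (indF S) = 0 := by
  have heq : (FF K σ h).divMonomial (indF S) = divMonL K n (indF S) (FF K σ h) := rfl
  rw [heq, FF_eq, map_sum]
  apply Finset.sum_eq_zero
  intro π _
  have : divMonL K n (indF S) (monomial (expo σ h π) (((Equiv.Perm.sign π : ℤ) : K)))
      = (monomial (expo σ h π) (((Equiv.Perm.sign π : ℤ) : K))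
          : MvPolynomial (Fin n) K).divMonomial (indF S) := rfl
  rw [this, divMonomial_monomial, if_neg (not_indF_le hS h π)]

noncomputable def uexpo (σ : Finset (Fin n)) (h : σ.card = d + 1)
    (U : Finset (Fin (d + 1))) (π : Equiv.Perm (Fin (d + 1))) : Fin n →₀ ℕ :=
  sumSingle σ h (fun i => (π i : ℕ) + (if π i ∈ U then 1 else 0))

noncomputable def DD (K : Type*) [Field K] {n d : ℕ} (σ : Finset (Fin n))
    (h : σ.card = d + 1) (U : Finset (Fin (d + 1))) : MvPolynomial (Fin n) K :=
  ∑ π : Equiv.Perm (Fin (d + 1)), monomial (uexpo σ h U π) (((Equiv.Perm.sign π : ℤ) : K))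

lemma divMon_FF_sub (σ : Finset (Fin n)) (h : σ.card = d + 1) {S : Finset (Fin n)}
    (hS : S ⊆ σ) :
    (FF K σ h).divMonomial (indF S) = ∑ π : Equiv.Perm (Fin (d + 1)),
      monomial (expo σ h π - indF S) (((Equiv.Perm.sign π : ℤ) : K)) := by
  have heq : (FF K σ h).divMonomial (indF S) = divMonL K n (indF S) (FF K σ h) := rfl
  rw [heq, FF_eq, map_sum]
  apply Finset.sum_congr rfl
  intro π _
  have h2 : divMonL K n (indF S) (monomial (expo σ h π) (((Equiv.Perm.sign π : ℤ) : K)))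
      = (monomial (expo σ h π) (((Equiv.Perm.sign π : ℤ) : K))
          : MvPolynomial (Fin n) K).divMonomial (indF S) := rfl
  rw [h2, divMonomial_monomial, if_pos (indF_le hS h π)]

lemma step2 (σ : Finset (Fin n)) (h : σ.card = d + 1) (k : ℕ) (hk : k ≤ d + 1) :
    ∑ S ∈ σ.powersetCard k, (FF K σ h).divMonomial (indF S)
      = ∑ U ∈ (Finset.univ : Finset (Fin (d + 1))).powersetCard (d + 1 - k),
          DD K σ h U := by
  classical
  rw [Finset.sum_congr rfl (fun S hS =>
    divMon_FF_sub σ h (Finset.mem_powersetCard.mp hS).1)]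
  simp only [DD]
  rw [Finset.sum_comm, Finset.sum_comm
    (s := (Finset.univ : Finset (Fin (d + 1))).powersetCard (d + 1 - k))]
  apply Finset.sum_congr rfl
  intro π _
  set e : Fin (d + 1) → Fin n := (σ.orderEmbOfFin h : Fin (d + 1) → Fin n) with he
  have hembinj : Function.Injective e := (σ.orderEmbOfFin h).injective
  have hπinj : Function.Injective (π : Fin (d + 1) → Fin (d + 1)) := π.injective
  set iS : Finset (Fin n) → Finset (Fin (d + 1)) :=
    fun S => ((Finset.univ.filter fun i : Fin (d + 1) => e i ∉ S).image π) with hiS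
  set jU : Finset (Fin (d + 1)) → Finset (Fin n) :=
    fun U => ((Finset.univ.filter fun i : Fin (d + 1) => π i ∉ U).image e) with hjU
  have hcard1 : ∀ S ∈ σ.powersetCard k,
      (Finset.univ.filter fun i : Fin (d + 1) => e i ∈ S).card = k := by
    intro S hS
    obtain ⟨hsub, hcard⟩ := Finset.mem_powersetCard.mp hS
    rw [card_filter_mem hembinj (fun v hv => (mem_iff_emb σ h v).mp (hsub hv)), hcard]
  have hcard2 : ∀ U : Finset (Fin (d + 1)),
      (Finset.univ.filter fun i : Fin (d + 1) => π i ∈ U).card = U.card := by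
    intro U
    exact card_filter_mem hπinj (fun v _ => ⟨π.symm v, π.apply_symm_apply v⟩)
  have hcomp : ∀ (P : Fin (d + 1) → Prop) [DecidablePred P],
      (Finset.univ.filter fun i => ¬ P i).card
        = (d + 1) - (Finset.univ.filter P).card := by
    intro P _
    have := Finset.card_filter_add_card_filter_not
      (s := (Finset.univ : Finset (Fin (d + 1)))) (p := P)
    simp only [Finset.card_univ, Fintype.card_fin] at this
    omega
  apply Finset.sum_nbij' iS jU
  · intro S hS
    rw [Finset.mem_powersetCard]
    refine ⟨Finset.subset_univ _, ?_⟩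
    rw [hiS]
    rw [Finset.card_image_of_injective _ hπinj, hcomp, hcard1 S hS]
  · intro U hU
    obtain ⟨_, hUcard⟩ := Finset.mem_powersetCard.mp hU
    rw [Finset.mem_powersetCard]
    constructor
    · rw [hjU]
      intro v hv
      simp only [Finset.mem_image] at hv
      obtain ⟨i, _, rfl⟩ := hv
      exact σ.orderEmbOfFin_mem h i
    · rw [hjU, Finset.card_image_of_injective _ hembinj, hcomp, hcard2, hUcard]
      omega
  · intro S hS
    obtain ⟨hsub, _⟩ := Finset.mem_powersetCard.mp hS
    simp only [hjU, hiS]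
    have h1 : (Finset.univ.filter fun i : Fin (d + 1) =>
        π i ∉ (Finset.univ.filter fun i : Fin (d + 1) => e i ∉ S).image π)
        = Finset.univ.filter fun i : Fin (d + 1) => e i ∈ S := by
      apply Finset.filter_congr
      intro i _
      simp [hπinj.mem_finset_image, not_not]
    rw [h1, image_filter_eq hembinj (fun v hv => (mem_iff_emb σ h v).mp (hsub hv))]
  · intro U _
    simp only [hjU, hiS]
    have h1 : (Finset.univ.filter fun i : Fin (d + 1) =>
        e i ∉ (Finset.univ.filter fun i : Fin (d + 1) => π i ∉ U).image e)
        = Finset.univ.filter fun i : Fin (d + 1) => π i ∈ U := by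
      apply Finset.filter_congr
      intro i _
      simp [hembinj.mem_finset_image, not_not]
    rw [h1, image_filter_eq hπinj (fun v _ => ⟨π.symm v, π.apply_symm_apply v⟩)]
  · intro S hS
    obtain ⟨hsub, _⟩ := Finset.mem_powersetCard.mp hS
    have hexp : expo σ h π - indF S = uexpo σ h (iS S) π := by
      ext v
      rw [Finsupp.tsub_apply]
      by_cases hv : v ∈ σ
      · obtain ⟨i, rfl⟩ := (mem_iff_emb σ h v).mp hv
        rw [expo, sumSingle_apply_emb, indF_apply, uexpo, sumSingle_apply_emb]
        have hmem : π i ∈ iS S ↔ e i ∉ S := by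
          rw [hiS]
          simp [hπinj.mem_finset_image]
        by_cases hvS : e i ∈ S
        · rw [if_pos hvS, if_neg (by rw [hmem]; exact not_not_intro hvS)]
          omega
        · rw [if_neg hvS, if_pos (hmem.mpr hvS)]
          omega
      · rw [expo, sumSingle_apply_not_mem σ h _ hv, uexpo,
          sumSingle_apply_not_mem σ h _ hv]
        simp
    rw [hexp]

lemma DD_det (σ : Finset (Fin n)) (h : σ.card = d + 1) (U : Finset (Fin (d + 1))) :
    DD K σ h U = Matrix.det (Matrix.of fun r c : Fin (d + 1) =>
      (X (σ.orderEmbOfFin h c) : MvPolynomial (Fin n) K)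
        ^ ((r : ℕ) + if r ∈ U then 1 else 0)) := by
  rw [Matrix.det_apply']
  apply Finset.sum_congr rfl
  intro π _
  rw [show (∏ i, Matrix.of (fun r c : Fin (d + 1) =>
      (X (σ.orderEmbOfFin h c) : MvPolynomial (Fin n) K)
        ^ ((r : ℕ) + if r ∈ U then 1 else 0)) (π i) i)
    = monomial (uexpo σ h U π) 1 from prod_X_pow Finset.univ _ _,
    ← map_intCast (C : K →+* MvPolynomial (Fin n) K), C_mul_monomial, mul_one]

lemma upward (U : Finset (Fin (d + 1)))
    (hsc : ∀ i j : Fin (d + 1), i ∈ U → (i : ℕ) + 1 = (j : ℕ) → j ∈ U) :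
    ∀ i : Fin (d + 1), i ∈ U → ∀ j : Fin (d + 1), i ≤ j → j ∈ U := by
  intro i hi
  have aux : ∀ t : ℕ, ∀ hj : (i : ℕ) + t < d + 1, (⟨(i : ℕ) + t, hj⟩ : Fin (d + 1)) ∈ U := by
    intro t
    induction t with
    | zero => intro hj; have : (⟨(i : ℕ) + 0, hj⟩ : Fin (d + 1)) = i := Fin.ext (by simp)
              rw [this]; exact hi
    | succ t ih =>
      intro hj
      have hj' : (i : ℕ) + t < d + 1 := by omega
      exact hsc ⟨(i : ℕ) + t, hj'⟩ ⟨(i : ℕ) + (t + 1), hj⟩ (ih hj') (by simp; omega)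
  intro j hij
  have : j = ⟨(i : ℕ) + ((j : ℕ) - (i : ℕ)), by have := j.2; omega⟩ := by
    apply Fin.ext; simp
    have : (i : ℕ) ≤ (j : ℕ) := hij
    omega
  rw [this]
  exact aux _ _

lemma U_fix (k : ℕ) (hk : k ≤ d + 1) (U : Finset (Fin (d + 1)))
    (hcard : U.card = d + 1 - k)
    (hsc : ∀ i j : Fin (d + 1), i ∈ U → (i : ℕ) + 1 = (j : ℕ) → j ∈ U) :
    U = Finset.univ.filter (fun r : Fin (d + 1) => k ≤ (r : ℕ)) := by
  have hup := upward U hsc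
  have hsub : U ⊆ Finset.univ.filter (fun r : Fin (d + 1) => k ≤ (r : ℕ)) := by
    intro i hi
    rw [Finset.mem_filter]
    refine ⟨Finset.mem_univ _, ?_⟩
    by_contra hlt
    push_neg at hlt
    have h1 : (Finset.univ.filter fun r : Fin (d + 1) => (i : ℕ) ≤ (r : ℕ)) ⊆ U := by
      intro j hj
      rw [Finset.mem_filter] at hj
      exact hup i hi j (Fin.le_def.mpr hj.2)
    have h2 := Finset.card_le_card h1
    rw [card_filter_le] at h2
    have h3 := i.2
    omega
  apply Finset.eq_of_subset_of_card_le hsub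
  rw [card_filter_le, hcard]

lemma step3 (σ : Finset (Fin n)) (h : σ.card = d + 1) (k : ℕ) (hk : k ≤ d + 1) :
    ∑ U ∈ (Finset.univ : Finset (Fin (d + 1))).powersetCard (d + 1 - k), DD K σ h U
      = DD K σ h (Finset.univ.filter (fun r : Fin (d + 1) => k ≤ (r : ℕ))) := by
  apply Finset.sum_eq_single_of_mem
  · rw [Finset.mem_powersetCard]
    exact ⟨Finset.subset_univ _, card_filter_le (d + 1) k⟩
  · intro U hU hne
    obtain ⟨_, hUcard⟩ := Finset.mem_powersetCard.mp hU
    have hsc : ¬ ∀ i j : Fin (d + 1), i ∈ U → (i : ℕ) + 1 = (j : ℕ) → j ∈ U := by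
      intro hsc
      exact hne (U_fix k hk U hUcard hsc)
    push_neg at hsc
    obtain ⟨i, j, hi, hij, hj⟩ := hsc
    rw [DD_det]
    have hij2 : i ≠ j := by
      intro hc
      rw [hc] at hij
      omega
    apply Matrix.det_zero_of_row_eq hij2
    funext c
    rw [Matrix.of_apply, Matrix.of_apply, if_pos hi, if_neg hj]
    congr 1

noncomputable def HH (K : Type*) [Field K] {n : ℕ} (d k : ℕ) (τ : Finset (Fin n)) :
    MvPolynomial (Fin n) K :=
  if hτ : τ.card = d then
    Matrix.det (Matrix.of fun r c : Fin d =>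
      (X (τ.orderEmbOfFin hτ c) : MvPolynomial (Fin n) K)
        ^ (((r : ℕ) + 1) + if k ≤ (r : ℕ) + 1 then 1 else 0))
  else 0

lemma step4 (σ : Finset (Fin n)) (h : σ.card = d + 1) (k : ℕ) (hk1 : 1 ≤ k) :
    DD K σ h (Finset.univ.filter (fun r : Fin (d + 1) => k ≤ (r : ℕ)))
      = ∑ j : Fin (d + 1),
          ((-1 : K) ^ (j : ℕ)) • HH K d k (σ.erase (σ.orderEmbOfFin h j)) := by
  rw [DD_det, Matrix.det_succ_row_zero]
  apply Finset.sum_congr rfl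
  intro j _
  have hτ : (σ.erase (σ.orderEmbOfFin h j)).card = d := by
    rw [Finset.card_erase_of_mem (σ.orderEmbOfFin_mem h j), h]
    omega
  have hcol : (fun c : Fin d => σ.orderEmbOfFin h (j.succAbove c))
      = ⇑((σ.erase (σ.orderEmbOfFin h j)).orderEmbOfFin hτ) := by
    apply Finset.orderEmbOfFin_unique hτ
    · intro c
      exact Finset.mem_erase.mpr
        ⟨(σ.orderEmbOfFin h).injective.ne (Fin.succAbove_ne j c),
          σ.orderEmbOfFin_mem h _⟩
    · exact (σ.orderEmbOfFin h).strictMono.comp (Fin.strictMono_succAbove j)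
  have hzero : Matrix.of (fun r c : Fin (d + 1) =>
      (X (σ.orderEmbOfFin h c) : MvPolynomial (Fin n) K)
        ^ ((r : ℕ) + if r ∈ Finset.univ.filter (fun r : Fin (d + 1) => k ≤ (r : ℕ))
            then 1 else 0)) 0 j = 1 := by
    rw [Matrix.of_apply, if_neg]
    · simp
    · simp only [Finset.mem_filter, Finset.mem_univ, true_and, Fin.val_zero]
      omega
  rw [hzero, mul_one]
  rw [HH, dif_pos hτ]
  have hmat : (Matrix.of fun r c : Fin (d + 1) =>
      (X (σ.orderEmbOfFin h c) : MvPolynomial (Fin n) K)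
        ^ ((r : ℕ) + if r ∈ Finset.univ.filter (fun r : Fin (d + 1) => k ≤ (r : ℕ))
            then 1 else 0)).submatrix Fin.succ j.succAbove
      = Matrix.of (fun r c : Fin d =>
        (X ((σ.erase (σ.orderEmbOfFin h j)).orderEmbOfFin hτ c) : MvPolynomial (Fin n) K)
          ^ (((r : ℕ) + 1) + if k ≤ (r : ℕ) + 1 then 1 else 0)) := by
    funext r c
    rw [Matrix.submatrix_apply, Matrix.of_apply, Matrix.of_apply, ← hcol]
    congr 1
    simp only [Finset.mem_filter, Finset.mem_univ, true_and, Fin.val_succ]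
  rw [hmat, smul_eq_C_mul, map_pow, map_neg, map_one]

lemma bdry_erase (σ : Finset (Fin n)) (h : σ.card = d + 1) (j : Fin (d + 1)) :
    bdryCoeff σ (σ.erase (σ.orderEmbOfFin h j)) = (-1 : ℤ) ^ (j : ℕ) := by
  rw [bdryCoeff, if_pos (Finset.erase_subset _ _),
    Finset.sdiff_erase_self (σ.orderEmbOfFin_mem h j), Finset.sum_singleton]
  congr 1
  have himg : σ.filter (fun w => w < σ.orderEmbOfFin h j)
      = (Finset.univ.filter fun i : Fin (d + 1) => (i : ℕ) < (j : ℕ)).image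
          (σ.orderEmbOfFin h) := by
    ext w
    simp only [Finset.mem_filter, Finset.mem_image, Finset.mem_univ, true_and]
    constructor
    · rintro ⟨hwσ, hlt⟩
      obtain ⟨i, rfl⟩ := (mem_iff_emb σ h w).mp hwσ
      refine ⟨i, ?_, rfl⟩
      rw [← Fin.lt_def]
      exact (OrderEmbedding.lt_iff_lt (σ.orderEmbOfFin h)).mp hlt
    · rintro ⟨i, hij, rfl⟩
      refine ⟨σ.orderEmbOfFin_mem h i, ?_⟩
      exact (OrderEmbedding.lt_iff_lt (σ.orderEmbOfFin h)).mpr (Fin.lt_def.mpr hij)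
  rw [himg, Finset.card_image_of_injective _ (σ.orderEmbOfFin h).injective,
    card_filter_lt _ _ (le_of_lt j.2)]

lemma exists_erase (σ : Finset (Fin n)) (h : σ.card = d + 1) {τ : Finset (Fin n)}
    (hτc : τ.card = d) (hsub : τ ⊆ σ) :
    ∃ j : Fin (d + 1), τ = σ.erase (σ.orderEmbOfFin h j) := by
  have hex : ∃ v ∈ σ, v ∉ τ := by
    by_contra hc
    push_neg at hc
    have := Finset.card_le_card (fun v hv => hc v hv)
    omega
  obtain ⟨v, hvσ, hvτ⟩ := hex
  obtain ⟨j, rfl⟩ := (mem_iff_emb σ h v).mp hvσ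
  refine ⟨j, ?_⟩
  apply Finset.eq_of_subset_of_card_le
  · intro w hw
    exact Finset.mem_erase.mpr ⟨fun hc => hvτ (hc ▸ hw), hsub hw⟩
  · rw [Finset.card_erase_of_mem hvσ, h, hτc]
    omega

lemma bdry_notin (σ : Finset (Fin n)) (h : σ.card = d + 1) {τ : Finset (Fin n)}
    (hτc : τ.card = d)
    (hni : τ ∉ Finset.univ.image (fun j : Fin (d + 1) => σ.erase (σ.orderEmbOfFin h j))) :
    bdryCoeff σ τ = 0 := by
  rw [bdryCoeff, if_neg]
  intro hsub
  obtain ⟨j, hj⟩ := exists_erase σ h hτc hsub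
  exact hni (Finset.mem_image.mpr ⟨j, Finset.mem_univ _, hj.symm⟩)

lemma key (σ : Finset (Fin n)) (h : σ.card = d + 1) (k : ℕ) (hk1 : 1 ≤ k)
    (hk : k ≤ d + 1) :
    contractL (esymm (Fin n) K k) (FF K σ h)
      = ∑ τ ∈ (Finset.univ : Finset (Fin n)).powersetCard d,
          ((bdryCoeff σ τ : ℤ) : K) • HH K d k τ := by
  have h1 : contractL (esymm (Fin n) K k) (FF K σ h)
      = ∑ S ∈ (Finset.univ : Finset (Fin n)).powersetCard k,
          (FF K σ h).divMonomial (indF S) := by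
    rw [esymm, contractL_sum, LinearMap.sum_apply]
    apply Finset.sum_congr rfl
    intro S _
    rw [prod_X_eq_monomial_indF, contractL_monomial, LinearMap.smul_apply, one_smul]
    rfl
  rw [h1, ← Finset.sum_subset (Finset.powersetCard_mono (Finset.subset_univ σ))
    (fun S hS hS2 => divMon_FF_zero σ h (fun hsub => hS2
      (Finset.mem_powersetCard.mpr ⟨hsub, (Finset.mem_powersetCard.mp hS).2⟩))),
    step2 σ h k hk, step3 σ h k hk, step4 σ h k hk1]
  symm
  have himgsub : Finset.univ.image (fun j : Fin (d + 1) => σ.erase (σ.orderEmbOfFin h j))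
      ⊆ (Finset.univ : Finset (Fin n)).powersetCard d := by
    intro τ hτ
    obtain ⟨j, _, hj⟩ := Finset.mem_image.mp hτ
    rw [Finset.mem_powersetCard]
    refine ⟨Finset.subset_univ _, ?_⟩
    rw [← hj, Finset.card_erase_of_mem (σ.orderEmbOfFin_mem h j), h]
    omega
  rw [← Finset.sum_subset himgsub (fun τ hτ hτ2 => by
    rw [bdry_notin σ h (Finset.mem_powersetCard.mp hτ).2 hτ2, Int.cast_zero, zero_smul])]
  rw [Finset.sum_image (fun x _ y _ hxy => (σ.orderEmbOfFin h).injective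
    ((Finset.erase_inj σ (σ.orderEmbOfFin_mem h x)).mp hxy))]
  apply Finset.sum_congr rfl
  intro j _
  rw [bdry_erase σ h j]
  norm_cast

variable (K) in
noncomputable def Phi {n : ℕ} (Δ : Finset (Finset (Fin n))) (d : ℕ) :
    ({σ // σ ∈ Δ.filter fun σ => σ.card = d + 1} → K) →ₗ[K] MvPolynomial (Fin n) K where
  toFun c := ∑ σ : {σ // σ ∈ Δ.filter fun σ => σ.card = d + 1},
      c σ • FF K σ.1 (Finset.mem_filter.mp σ.2).2
  map_add' c c' := by
    simp [add_smul, Finset.sum_add_distrib]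
  map_smul' a c := by
    simp [smul_smul, Finset.smul_sum]

lemma Phi_ker (Δ : Finset (Finset (Fin n)))
    (c : {σ // σ ∈ Δ.filter fun σ => σ.card = d + 1} → K)
    (hc : Phi K Δ d c = 0) : c = 0 := by
  funext σ
  have hσ : σ.1.card = d + 1 := (Finset.mem_filter.mp σ.2).2
  have h2 := congrArg (coeff (expo σ.1 hσ 1)) hc
  rw [show (Phi K Δ d) c = ∑ σ : {σ // σ ∈ Δ.filter fun σ => σ.card = d + 1}, c σ • FF K σ.1 (Finset.mem_filter.mp σ.2).2 from rfl] at h2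
  simp only [Phi, LinearMap.coe_mk, AddHom.coe_mk, MvPolynomial.coeff_sum,
    MvPolynomial.coeff_smul, MvPolynomial.coeff_zero] at h2
  rw [Finset.sum_eq_single σ] at h2
  · rw [coeff_FF σ.1 σ.1 hσ hσ 1, if_pos rfl] at h2
    simpa using h2
  · intro σ' _ hne
    rw [coeff_FF σ.1 σ'.1 hσ (Finset.mem_filter.mp σ'.2).2 1, if_neg, smul_zero]
    intro hc2
    exact hne (Subtype.ext hc2)
  · simp

lemma Phi_inj (Δ : Finset (Finset (Fin n))) : Function.Injective ⇑(Phi K Δ (d := d)) := by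
  intro c c' hcc
  have h0 := Phi_ker Δ (c - c') (by rw [map_sub, hcc, sub_self])
  exact sub_eq_zero.mp h0

lemma Phi_mem_homog (Δ : Finset (Finset (Fin n)))
    (c : {σ // σ ∈ Δ.filter fun σ => σ.card = d + 1} → K) :
    Phi K Δ d c ∈ homogeneousSubmodule (Fin n) K ((d + 2).choose 2) :=
  Submodule.sum_mem _ (fun σ _ => Submodule.smul_mem _ _ (FF_homog σ.1 _))

lemma Phi_contract (Δ : Finset (Finset (Fin n)))
    (hdown : ∀ σ ∈ Δ, ∀ τ ⊆ σ, τ ∈ Δ)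
    (c : {σ // σ ∈ Δ.filter fun σ => σ.card = d + 1} → K)
    (hc : bdryMap K Δ d c = 0) :
    ∀ g ∈ (SRIdeal K n Δ ⊔
      Ideal.span {p | ∃ i : ℕ, 1 ≤ i ∧ i ≤ d + 1 ∧ p = esymm (Fin n) K i}),
      contractL g (Phi K Δ d c) = 0 := by
  set q := Phi K Δ d c with hq
  let P : Ideal (MvPolynomial (Fin n) K) :=
  { carrier := {g | contractL g q = 0}
    add_mem' := fun {a b} ha hb => by
      simp only [Set.mem_setOf_eq] at *
      rw [contractL_add, LinearMap.add_apply, ha, hb, add_zero]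
    zero_mem' := by
      simp only [Set.mem_setOf_eq, contractL_zero, LinearMap.zero_apply]
    smul_mem' := fun p g hg => by
      simp only [Set.mem_setOf_eq, smul_eq_mul] at *
      rw [contractL_mul, LinearMap.comp_apply, hg, map_zero] }
  intro g hg
  suffices hsuf : (SRIdeal K n Δ ⊔
      Ideal.span {p | ∃ i : ℕ, 1 ≤ i ∧ i ≤ d + 1 ∧ p = esymm (Fin n) K i}) ≤ P from hsuf hg
  apply sup_le
  · rw [SRIdeal, Ideal.span_le]
    rintro p ⟨τ, hτΔ, rfl⟩
    show contractL (∏ j ∈ τ, (X j : MvPolynomial (Fin n) K)) q = 0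
    rw [prod_X_eq_monomial_indF, contractL_monomial, LinearMap.smul_apply, one_smul]
    rw [hq]
    rw [show (Phi K Δ d) c = ∑ σ : {σ // σ ∈ Δ.filter fun σ => σ.card = d + 1}, c σ • FF K σ.1 (Finset.mem_filter.mp σ.2).2 from rfl]
    rw [map_sum]
    apply Finset.sum_eq_zero
    intro σ _
    rw [map_smul]
    have hnot : ¬ τ ⊆ σ.1 := fun hsub =>
      hτΔ (hdown σ.1 (Finset.mem_filter.mp σ.2).1 τ hsub)
    rw [show divMonL K n (indF τ) (FF K σ.1 (Finset.mem_filter.mp σ.2).2)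
        = (FF K σ.1 (Finset.mem_filter.mp σ.2).2).divMonomial (indF τ) from rfl,
      divMon_FF_zero σ.1 (Finset.mem_filter.mp σ.2).2 hnot, smul_zero]
  · rw [Ideal.span_le]
    rintro p ⟨i, hi1, hi2, rfl⟩
    show contractL (esymm (Fin n) K i) q = 0
    rw [hq]
    rw [show (Phi K Δ d) c = ∑ σ : {σ // σ ∈ Δ.filter fun σ => σ.card = d + 1}, c σ • FF K σ.1 (Finset.mem_filter.mp σ.2).2 from rfl]
    rw [map_sum]
    have hterm : ∀ σ : {σ // σ ∈ Δ.filter fun σ => σ.card = d + 1},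
        contractL (esymm (Fin n) K i) (c σ • FF K σ.1 (Finset.mem_filter.mp σ.2).2)
        = ∑ τ ∈ (Finset.univ : Finset (Fin n)).powersetCard d,
            (c σ * ((bdryCoeff σ.1 τ : ℤ) : K)) • HH K d i τ := by
      intro σ
      rw [map_smul, key σ.1 (Finset.mem_filter.mp σ.2).2 i hi1 hi2, Finset.smul_sum]
      apply Finset.sum_congr rfl
      intro τ _
      rw [smul_smul]
    rw [Finset.sum_congr rfl (fun σ _ => hterm σ), Finset.sum_comm]
    apply Finset.sum_eq_zero
    intro τ hτ
    rw [← Finset.sum_smul]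
    have hτc : τ.card = d := (Finset.mem_powersetCard.mp hτ).2
    have hval := congrFun hc τ
    simp only [bdryMap, LinearMap.coe_mk, AddHom.coe_mk, if_pos hτc, Pi.zero_apply] at hval
    rw [hval, zero_smul]

lemma main (Δ : Finset (Finset (Fin n)))
    (hdown : ∀ σ ∈ Δ, ∀ τ ⊆ σ, τ ∈ Δ) :
    Module.finrank K (LinearMap.ker (bdryMap K Δ d))
      ≤ Module.finrank K (invSysPiece K n
          (SRIdeal K n Δ ⊔
            Ideal.span {p | ∃ i : ℕ, 1 ≤ i ∧ i ≤ d + 1 ∧ p = esymm (Fin n) K i})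
          ((d + 2).choose 2)) := by
  classical
  set J := SRIdeal K n Δ ⊔
      Ideal.span {p | ∃ i : ℕ, 1 ≤ i ∧ i ≤ d + 1 ∧ p = esymm (Fin n) K i} with hJ
  set t := (d + 2).choose 2 with ht
  have hle : invSysPiece K n J t ≤ restrictTotalDegree (Fin n) K t := by
    intro p hp
    rw [invSysPiece, Submodule.mem_inf] at hp
    rw [mem_restrictTotalDegree]
    exact ((mem_homogeneousSubmodule _ _).mp hp.1).totalDegree_le
  have hfd : FiniteDimensional K (invSysPiece K n J t) :=
    Submodule.finiteDimensional_of_le hle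
  let killer : (LinearMap.ker (bdryMap K Δ d)) →ₗ[K] MvPolynomial (Fin n) K :=
    (Phi K Δ d).comp (LinearMap.ker (bdryMap K Δ d)).subtype
  have hmem : ∀ x : LinearMap.ker (bdryMap K Δ d), killer x ∈ invSysPiece K n J t := by
    intro x
    rw [invSysPiece, Submodule.mem_inf]
    constructor
    · exact Phi_mem_homog Δ x.1
    · rw [Submodule.mem_iInf]
      intro g
      rw [Submodule.mem_iInf]
      intro hg
      rw [LinearMap.mem_ker]
      exact Phi_contract Δ hdown x.1 (LinearMap.mem_ker.mp x.2) g hg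
  let L := LinearMap.codRestrict (invSysPiece K n J t) killer hmem
  have hinj : Function.Injective L := by
    intro a b hab
    have h1 : killer a = killer b := congrArg Subtype.val hab
    have h2 : Phi K Δ d a.1 = Phi K Δ d b.1 := h1
    exact Subtype.ext (Phi_inj Δ h2)
  exact LinearMap.finrank_le_finrank_of_injective hinj

end St13

/-- for a `d`-dimensional simplicial complex `Δ` on `n` vertices and
`t = C(d+2,2)`, the dimension of the degree-`t` part of the inverse system of
`I_Δ + (e_1, …, e_{d+1})` is at least `dim_K H̃_d(Δ; K)` (the top reduced homology,
which is the kernel of the top boundary map). -/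
theorem stmt13 (K : Type*) [Field K] (n d : ℕ)
    (Δ : Finset (Finset (Fin n)))
    (hdown : ∀ σ ∈ Δ, ∀ τ ⊆ σ, τ ∈ Δ)
    (hdim : ∀ σ ∈ Δ, σ.card ≤ d + 1) :
    Module.finrank K (LinearMap.ker (bdryMap K Δ d))
      ≤ Module.finrank K (invSysPiece K n
          (SRIdeal K n Δ ⊔
            Ideal.span {p | ∃ i : ℕ, 1 ≤ i ∧ i ≤ d + 1 ∧ p = esymm (Fin n) K i})
          ((d + 2).choose 2)) := St13.main Δ hdown
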